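/- arXiv:1808.07160 — 3 statements merged into one kernel-verified Lean document; each statement's English description precedes it below -/
import Mathlib

section
/- For every singular cardinal κ there exists a family F of functions from cof(κ) to κ with |F| = 2^κ such that any two distinct f, g ∈ F agree on a set of cardinality less than cof(κ), provided κ is a strong limit cardinal. -/
open Cardinal Ordinal

theorem stmt9 (κ : Cardinal.{u})
    (hsing : κ.ord.cof < κ)
    (hsl : κ.IsStrongLimit)
    (α β : Type u) (hα : #α = κ.ord.cof) (hβ : #β = κ) :
    ∃ F : Set (α → β), #F = 2 ^ κ ∧
      ∀ f ∈ F, ∀ g ∈ F, f ≠ g → #{ξ : α // f ξ = g ξ} < κ.ord.cof := by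
  letI iwα : IsWellOrder κ.ord.cof.ord.ToType (· < ·) := isWellOrder_lt
  letI iwβ : IsWellOrder κ.ord.ToType (· < ·) := isWellOrder_lt
  have hκ : ℵ₀ ≤ κ := hsl.aleph0_le
  have hκord : Order.IsSuccLimit κ.ord := Cardinal.isSuccLimit_ord hκ
  have hlamord : Order.IsSuccLimit κ.ord.cof.ord :=
    Cardinal.isSuccLimit_ord (Ordinal.aleph0_le_cof.2 hκord)
  obtain ⟨f, hf⟩ := Ordinal.exists_fundamental_sequence κ.ord
  obtain ⟨eα⟩ : Nonempty (α ≃ κ.ord.cof.ord.ToType) :=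
    Cardinal.eq.1 (by rw [hα, mk_toType, Cardinal.card_ord])
  obtain ⟨eβ⟩ : Nonempty (β ≃ κ.ord.ToType) :=
    Cardinal.eq.1 (by rw [hβ, mk_toType, Cardinal.card_ord])
  have hfc : ∀ {i j : Ordinal} (hi : i < κ.ord.cof.ord) (hj : j < κ.ord.cof.ord),
      i = j → f i hi = f j hj := by
    rintro i j hi hj rfl; rfl
  set I : α → Ordinal := fun ξ => typein (α := κ.ord.cof.ord.ToType) (· < ·) (eα ξ) with hI_def
  have hI : ∀ ξ, I ξ < κ.ord.cof.ord := fun ξ => typein_lt_self _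
  set R : β → Ordinal := fun b => typein (α := κ.ord.ToType) (· < ·) (eβ b) with hR_def
  have hR : ∀ b, R b < κ.ord := fun b => typein_lt_self _
  set O : α → Ordinal := fun ξ => f (I ξ) (hI ξ) with hO_def
  have hO : ∀ ξ, O ξ < κ.ord := fun ξ => by
    have := Ordinal.lt_blsub f (I ξ) (hI ξ)
    rwa [hf.blsub_eq] at this
  set B : α → Set β := fun ξ => {b | R b < O ξ} with hB_def
  -- cardinality of each B ξ is < κ
  have hBcard : ∀ ξ, #(B ξ) < κ := by
    intro ξ
    letI : IsWellOrder (O ξ).ToType (· < ·) := isWellOrder_lt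
    have hinj : Function.Injective (fun b : B ξ =>
        enum (α := (O ξ).ToType) (· < ·)
          ⟨R b.1, by rw [type_toType]; exact b.2⟩) := by
      intro b c h
      have h1 := Subtype.ext_iff.1 ((enum (α := (O ξ).ToType) (· < ·)).injective h)
      have h2 : eβ b.1 = eβ c.1 :=
        (typein (α := κ.ord.ToType) (· < ·)).injective h1
      exact Subtype.ext (eβ.injective h2)
    calc #(B ξ) ≤ #(O ξ).ToType := Cardinal.mk_le_of_injective hinj
      _ = (O ξ).card := mk_toType _
      _ < κ := Cardinal.lt_ord.1 (hO ξ)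
  -- encodings
  have hen : ∀ ξ, Nonempty (Set (B ξ) ↪ β) := by
    intro ξ
    rw [← Cardinal.le_def, Cardinal.mk_set, hβ]
    exact (hsl.two_power_lt (hBcard ξ)).le
  set enc : ∀ ξ, Set (B ξ) ↪ β := fun ξ => (hen ξ).some with henc_def
  set Φ : Set β → (α → β) := fun X ξ => enc ξ {b : B ξ | b.1 ∈ X} with hΦ_def
  -- every b is in some B ξ
  have hcov : ∀ b : β, ∃ ξ : α, b ∈ B ξ := by
    intro b
    have h1 : R b < blsub κ.ord.cof.ord f := by rw [hf.blsub_eq]; exact hR b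
    obtain ⟨i, hi, hle⟩ := Ordinal.lt_blsub_iff.1 h1
    have hsi : Order.succ i < κ.ord.cof.ord := hlamord.succ_lt hi
    refine ⟨eα.symm (enum (α := κ.ord.cof.ord.ToType) (· < ·) ⟨Order.succ i, by rw [type_toType]; exact hsi⟩), ?_⟩
    show R b < O _
    have hIeq : I (eα.symm (enum (α := κ.ord.cof.ord.ToType) (· < ·) ⟨Order.succ i, by rw [type_toType]; exact hsi⟩))
        = Order.succ i := by
      simp only [hI_def, Equiv.apply_symm_apply]
      exact typein_enum _ _
    have : O (eα.symm (enum (α := κ.ord.cof.ord.ToType) (· < ·) ⟨Order.succ i, by rw [type_toType]; exact hsi⟩))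
        = f (Order.succ i) hsi := hfc _ _ hIeq
    rw [this]
    exact hle.trans_lt (hf.2.1 hi hsi (Order.lt_succ _))
  -- key: if encoded values agree at ξ but X, Y differ at b, then b ∉ B ξ
  have hkey : ∀ (X Y : Set β) (b : β) (ξ : α), ¬(b ∈ X ↔ b ∈ Y) →
      Φ X ξ = Φ Y ξ → b ∉ B ξ := by
    intro X Y b ξ hb h hbB
    apply hb
    have h2 : {c : B ξ | c.1 ∈ X} = {c : B ξ | c.1 ∈ Y} := (enc ξ).injective h
    exact ⟨fun hx => (Set.ext_iff.1 h2 ⟨b, hbB⟩).1 hx,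
      fun hy => (Set.ext_iff.1 h2 ⟨b, hbB⟩).2 hy⟩
  have hdiff : ∀ X Y : Set β, X ≠ Y → ∃ b, ¬(b ∈ X ↔ b ∈ Y) := by
    intro X Y h
    by_contra hc
    push_neg at hc
    exact h (Set.ext fun b => hc b)
  have hΦinj : Function.Injective Φ := by
    intro X Y h
    by_contra hne
    obtain ⟨b, hb⟩ := hdiff X Y hne
    obtain ⟨ξ, hξ⟩ := hcov b
    exact hkey X Y b ξ hb (congrFun h ξ) hξ
  refine ⟨Set.range Φ, ?_, ?_⟩
  · rw [Cardinal.mk_range_eq _ hΦinj, Cardinal.mk_set, hβ]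
  · rintro _ ⟨X, rfl⟩ _ ⟨Y, rfl⟩ hne
    obtain ⟨b, hb⟩ := hdiff X Y (fun h => hne (by rw [h]))
    have h1 : R b < blsub κ.ord.cof.ord f := by rw [hf.blsub_eq]; exact hR b
    obtain ⟨i, hi, hle⟩ := Ordinal.lt_blsub_iff.1 h1
    have hsi : Order.succ i < κ.ord.cof.ord := hlamord.succ_lt hi
    set t0 : κ.ord.cof.ord.ToType :=
      enum (α := κ.ord.cof.ord.ToType) (· < ·) ⟨Order.succ i, by rw [type_toType]; exact hsi⟩ with ht0
    have hmap : ∀ ξ : {ξ : α // Φ X ξ = Φ Y ξ}, eα ξ.1 < t0 := by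
      intro ⟨ξ, hξ⟩
      have hnb : b ∉ B ξ := hkey X Y b ξ hb hξ
      have hOle : O ξ ≤ R b := not_lt.1 hnb
      have hIlt : I ξ < Order.succ i := by
        by_contra hcon
        have := hf.monotone hsi (hI ξ) (not_lt.1 hcon)
        have h3 : f i hi < f (Order.succ i) hsi := hf.2.1 hi hsi (Order.lt_succ _)
        exact absurd (this.trans hOle) (not_le.2 (hle.trans_lt h3))
      have : typein (α := κ.ord.cof.ord.ToType) (· < ·) (eα ξ) <
          typein (α := κ.ord.cof.ord.ToType) (· < ·) t0 := by
        rw [ht0]; exact hIlt.trans_eq (typein_enum _ _).symm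
      exact (typein_lt_typein _).1 this
    have hinj2 : Function.Injective
        (fun ξ : {ξ : α // Φ X ξ = Φ Y ξ} => (⟨eα ξ.1, hmap ξ⟩ : Set.Iio t0)) := by
      intro x y h
      exact Subtype.ext (eα.injective (Subtype.ext_iff.1 h))
    exact (Cardinal.mk_le_of_injective hinj2).trans_lt (mk_Iio_ord_toType t0)
end

section
/- Let κ be a singular strong limit cardinal of uncountable cofinality, and let J be an ideal on a set of size κ with κ ≤ |J| and |J| < cof(⟨J⟩, ⊆) where ⟨J⟩ is the σ-completion of J. Then 2^μ < cof(J, ⊆) for every cardinal μ < κ. -/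
open Cardinal

/-- The cofinality of a family of sets under inclusion. -/
noncomputable def cofFamily {α : Type u} (I : Set (Set α)) : Cardinal.{u} :=
  sInf {c | ∃ D : Set (Set α), D ⊆ I ∧ (∀ A ∈ I, ∃ B ∈ D, A ⊆ B) ∧ #D = c}

/-- The σ-completion of a family of sets: all countable unions of its members. -/
def sigmaCompletion {α : Type u} (J : Set (Set α)) : Set (Set α) :=
  {Y | ∃ A : ℕ → Set α, (∀ n, A n ∈ J) ∧ Y = ⋃ n, A n}

lemma exists_cofinal {α : Type u} (I : Set (Set α)) :
    ∃ D : Set (Set α), D ⊆ I ∧ (∀ A ∈ I, ∃ B ∈ D, A ⊆ B) ∧ #D = cofFamily I := by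
  have hne : {c | ∃ D : Set (Set α), D ⊆ I ∧ (∀ A ∈ I, ∃ B ∈ D, A ⊆ B) ∧ #D = c}.Nonempty :=
    ⟨#I, I, subset_rfl, fun A hA => ⟨A, hA, subset_rfl⟩, rfl⟩
  exact csInf_mem hne

lemma cofFamily_sigma {α : Type u} (J : Set (Set α)) :
    cofFamily (sigmaCompletion J) ≤ cofFamily J ^ ℵ₀ := by
  obtain ⟨D, hDJ, hDcof, hDcard⟩ := exists_cofinal J
  set D' : Set (Set α) := Set.range (fun f : ℕ → D => ⋃ n, (f n : Set α)) with hD'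
  have hsub : D' ⊆ sigmaCompletion J := by
    rintro _ ⟨f, rfl⟩
    exact ⟨fun n => f n, fun n => hDJ (f n).2, rfl⟩
  have hcof : ∀ Y ∈ sigmaCompletion J, ∃ B ∈ D', Y ⊆ B := by
    rintro Y ⟨A, hA, rfl⟩
    choose B hB hAB using fun n => hDcof (A n) (hA n)
    exact ⟨⋃ n, B n, ⟨fun n => ⟨B n, hB n⟩, rfl⟩, Set.iUnion_mono hAB⟩
  have h1 : cofFamily (sigmaCompletion J) ≤ #D' :=
    csInf_le (OrderBot.bddBelow _) ⟨D', hsub, hcof, rfl⟩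
  refine h1.trans ?_
  calc #D' ≤ #(ℕ → D) := Cardinal.mk_range_le
    _ = #D ^ ℵ₀ := by
        rw [Cardinal.mk_arrow]
        simp
    _ = cofFamily J ^ ℵ₀ := by rw [hDcard]

theorem stmt16 (κ : Cardinal.{u})
    (hsing : κ.ord.cof < κ)
    (hsl : κ.IsStrongLimit)
    (huncof : ℵ₀ < κ.ord.cof)
    {α : Type u} (hα : #α = κ)
    (J : Set (Set α))
    (hdown : ∀ A ∈ J, ∀ B ⊆ A, B ∈ J)
    (hunion : ∀ A ∈ J, ∀ B ∈ J, A ∪ B ∈ J)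
    (hfree : ∀ x : α, {x} ∈ J) (hproper : Set.univ ∉ J)
    (hJκ : κ ≤ #J)
    (hJcof : #J < cofFamily (sigmaCompletion J)) :
    ∀ μ < κ, 2 ^ μ < cofFamily J := by
  intro μ hμ
  have hℵ0 : ℵ₀ < κ := huncof.trans_le (Ordinal.cof_ord_le κ)
  set ν := max μ ℵ₀ with hν
  have hνκ : ν < κ := max_lt hμ hℵ0
  have h2ν : (2 : Cardinal) ^ ν < κ := hsl.2 hνκ
  have hmono : (2 : Cardinal) ^ μ ≤ 2 ^ ν :=
    Cardinal.power_le_power_left two_ne_zero (le_max_left _ _)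
  refine lt_of_le_of_lt hmono ?_
  by_contra h
  push_neg at h
  have key : cofFamily (sigmaCompletion J) ≤ 2 ^ ν := by
    refine (cofFamily_sigma J).trans ?_
    have h2 : cofFamily J ^ ℵ₀ ≤ ((2 : Cardinal) ^ ν) ^ ℵ₀ :=
      Cardinal.power_le_power_right h
    refine h2.trans_eq ?_
    rw [← Cardinal.power_mul,
      Cardinal.mul_eq_left (le_max_right _ _) (le_max_right _ _) Cardinal.aleph0_ne_zero]
  exact absurd (((hJκ.trans_lt hJcof).trans_le key).trans h2ν) (lt_irrefl κ)
end

section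
/- Let κ be a singular strong limit cardinal of uncountable cofinality and J an ideal with κ ≤ cof(J, ⊆), |J| < cof(⟨J⟩, ⊆), and cof(⟨J⟩,⊆) ≤ cof(J,⊆)^{ℵ₀}. Then κ⁺ⁿ < cof(J, ⊆) for every natural number n. -/
open Cardinal

/-- The `n`-th cardinal successor of `κ`. -/
noncomputable def nthSucc (κ : Cardinal) : ℕ → Cardinal
  | 0 => κ
  | n + 1 => Order.succ (nthSucc κ n)

universe u

theorem pow_aleph0_eq_self_aux {c : Cardinal.{u}} (hc : ℵ₀ ≤ c) (hcof : ℵ₀ < c.ord.cof)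
    (h : ∀ μ < c, μ ^ ℵ₀ ≤ c) : c ^ ℵ₀ = c := by
  haveI : IsWellOrder c.ord.ToType (· < ·) := ⟨⟩
  refine le_antisymm ?_ (self_le_power c (by simp))
  have hO : #c.ord.ToType = c := by rw [Cardinal.mk_toType, Cardinal.card_ord]
  have hpow : c ^ ℵ₀ = #(ℕ → c.ord.ToType) := by
    rw [Cardinal.mk_arrow, hO]; simp
  rw [hpow]
  have hbdd : ∀ f : ℕ → c.ord.ToType, ∃ b : c.ord.ToType, ∀ n, f n < b := by
    intro f
    have : #(Set.range f) < Order.cof c.ord.ToType := by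
      rw [Ordinal.cof_toType]
      haveI : Countable (Set.range f) := Set.countable_range f
      exact Cardinal.mk_le_aleph0.trans_lt hcof
    have hnc : ¬ IsCofinal (Set.range f) := fun h => (Order.cof_le h).not_gt this
    unfold IsCofinal at hnc
    push_neg at hnc
    obtain ⟨b, hb⟩ := hnc
    exact ⟨b, fun n => hb (f n) ⟨n, rfl⟩⟩
  classical
  have key : #(ℕ → c.ord.ToType) ≤ #(Σ b : c.ord.ToType, (ℕ → {x : c.ord.ToType // x < b})) := by
    refine Cardinal.mk_le_of_injective (f := fun f =>
      ⟨(hbdd f).choose, fun n => ⟨f n, (hbdd f).choose_spec n⟩⟩) ?_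
    intro f g hfg
    funext n
    exact congrArg (fun p : Σ b : c.ord.ToType, (ℕ → {x : c.ord.ToType // x < b}) => (p.2 n).1) hfg
  refine key.trans ?_
  rw [Cardinal.mk_sigma]
  have hle : ∀ b : c.ord.ToType, #(ℕ → {x : c.ord.ToType // x < b}) ≤ c := by
    intro b
    have h2 := Ordinal.typein_lt_type ((· < ·) : c.ord.ToType → c.ord.ToType → Prop) b
    rw [Ordinal.type_toType] at h2
    rw [Cardinal.lt_ord] at h2
    change #{x : c.ord.ToType // x < b} < c at h2
    calc #(ℕ → {x : c.ord.ToType // x < b}) = #{x : c.ord.ToType // x < b} ^ ℵ₀ := by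
            rw [Cardinal.mk_arrow]; simp
      _ ≤ c := h _ h2
  calc Cardinal.sum (fun b : c.ord.ToType => #(ℕ → {x : c.ord.ToType // x < b}))
      ≤ Cardinal.sum (fun _ : c.ord.ToType => c) := Cardinal.sum_le_sum _ _ hle
    _ = #c.ord.ToType * c := by rw [Cardinal.sum_const']
    _ = c := by rw [hO, Cardinal.mul_eq_self hc]


theorem nthSucc_zero (κ : Cardinal) : nthSucc κ 0 = κ := rfl
theorem nthSucc_succ (κ : Cardinal) (n : ℕ) : nthSucc κ (n + 1) = Order.succ (nthSucc κ n) := rfl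

theorem strongLimit_pow_aleph0 {κ : Cardinal.{u}} (hsl : κ.IsStrongLimit)
    (huncof : ℵ₀ < κ.ord.cof) : κ ^ ℵ₀ = κ := by
  have hκ : ℵ₀ < κ := huncof.trans_le (Ordinal.cof_ord_le κ)
  refine pow_aleph0_eq_self_aux hκ.le huncof (fun μ hμ => ?_)
  calc μ ^ ℵ₀ ≤ (2 ^ (μ ⊔ ℵ₀)) ^ ℵ₀ := by
        refine power_le_power_right ((Cardinal.cantor μ).le.trans ?_)
        exact power_le_power_left (by norm_num) le_sup_left
    _ = 2 ^ ((μ ⊔ ℵ₀) * ℵ₀) := by rw [power_mul]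
    _ = 2 ^ (μ ⊔ ℵ₀) := by rw [Cardinal.mul_aleph0_eq le_sup_right]
    _ ≤ κ := (hsl.two_power_lt (max_lt hμ hκ)).le

theorem nthSucc_aleph0_le {κ : Cardinal.{u}} (h : ℵ₀ ≤ κ) (n : ℕ) : ℵ₀ ≤ nthSucc κ n := by
  induction n with
  | zero => exact h
  | succ n ih => exact ih.trans (Order.le_succ _)

theorem nthSucc_pow_aleph0 {κ : Cardinal.{u}} (hsl : κ.IsStrongLimit)
    (huncof : ℵ₀ < κ.ord.cof) (n : ℕ) : nthSucc κ n ^ ℵ₀ = nthSucc κ n := by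
  have hκ : ℵ₀ < κ := huncof.trans_le (Ordinal.cof_ord_le κ)
  induction n with
  | zero => exact strongLimit_pow_aleph0 hsl huncof
  | succ n ih =>
    have hc : ℵ₀ ≤ nthSucc κ n := nthSucc_aleph0_le hκ.le n
    have hreg : (Order.succ (nthSucc κ n)).IsRegular := Cardinal.isRegular_succ hc
    rw [nthSucc_succ]
    refine pow_aleph0_eq_self_aux (hc.trans (Order.le_succ _)) ?_ (fun μ hμ => ?_)
    · rw [hreg.cof_eq]
      exact hc.trans_lt (Order.lt_succ_of_not_isMax (not_isMax _))
    · rw [Order.lt_succ_iff_of_not_isMax (not_isMax _)] at hμ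
      calc μ ^ ℵ₀ ≤ nthSucc κ n ^ ℵ₀ := power_le_power_right hμ
        _ = nthSucc κ n := ih
        _ ≤ Order.succ (nthSucc κ n) := Order.le_succ _


theorem cofFamily_le_mk {α : Type u} (I : Set (Set α)) : cofFamily I ≤ #I :=
  csInf_le' ⟨I, subset_rfl, fun A hA => ⟨A, hA, subset_rfl⟩, rfl⟩

theorem stmt17 (κ : Cardinal.{u})
    (hsing : κ.ord.cof < κ)
    (hsl : κ.IsStrongLimit)
    (huncof : ℵ₀ < κ.ord.cof)
    {α : Type u}
    (J : Set (Set α))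
    (hκcof : κ ≤ cofFamily J)
    (hJcof : #J < cofFamily (sigmaCompletion J))
    (hcofs : cofFamily (sigmaCompletion J) ≤ (cofFamily J) ^ ℵ₀) :
    ∀ n : ℕ, nthSucc κ n < cofFamily J := by
  have hne : ∀ n : ℕ, cofFamily J ≠ nthSucc κ n := by
    intro n heq
    have h1 : cofFamily (sigmaCompletion J) ≤ cofFamily J := by
      calc cofFamily (sigmaCompletion J) ≤ (cofFamily J) ^ ℵ₀ := hcofs
        _ = (nthSucc κ n) ^ ℵ₀ := by rw [heq]
        _ = nthSucc κ n := nthSucc_pow_aleph0 hsl huncof n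
        _ = cofFamily J := heq.symm
    exact absurd (hJcof.trans_le (h1.trans (cofFamily_le_mk J))) (lt_irrefl _)
  intro n
  induction n with
  | zero => exact lt_of_le_of_ne hκcof (fun h => hne 0 h.symm)
  | succ n ih =>
    refine lt_of_le_of_ne ?_ (fun h => hne (n + 1) h.symm)
    rw [nthSucc_succ]
    exact Order.succ_le_of_lt ih
end
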